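/- Let k be a field, let n ≥ 0 and m > 1 be integers, and let a : Fin n → Fin n → k. Let h : MvPolynomial (Fin n) k →ₐ[k] MvPolynomial (Fin n) k be the k-algebra endomorphism determined by h(X_i) = X_i^m + Σ_{j} C(a i j)·X_j for each i. Then h is a finite ring homomorphism, i.e. MvPolynomial (Fin n) k is a finitely generated module over itself via h (geometrically: the corresponding endomorphism of affine n-space 𝔸^n_k is a finite morphism). -/

import Mathlib

set_option linter.unnecessarySimpa false

open MvPolynomial

/-- **Lemma 5.14.** Let `k` be a field, `m > 1`, and `(a i j)` an `n × n` matrix over `k`.  The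
`k`-algebra endomorphism `h` of `k[X_0, …, X_{n-1}]` with `h(X_i) = X_i^m + Σ_j a i j · X_j` is a
finite ring homomorphism (geometrically: the corresponding endomorphism of `𝔸^n_k` is finite). -/
theorem stmt10 (k : Type*) [Field k] (n m : ℕ) (hm : 1 < m) (a : Fin n → Fin n → k)
    (h : MvPolynomial (Fin n) k →ₐ[k] MvPolynomial (Fin n) k)
    (hh : ∀ i : Fin n, h (MvPolynomial.X i) =
      MvPolynomial.X i ^ m + ∑ j : Fin n, MvPolynomial.C (a i j) * MvPolynomial.X j) :
    RingHom.Finite h.toRingHom := by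
  classical
  letI : Algebra (MvPolynomial (Fin n) k) (MvPolynomial (Fin n) k) := h.toRingHom.toAlgebra
  letI : SMul (MvPolynomial (Fin n) k) (MvPolynomial (Fin n) k) := Algebra.toSMul
  letI : Module (MvPolynomial (Fin n) k) (MvPolynomial (Fin n) k) := Algebra.toModule
  have hsmul : ∀ r x : MvPolynomial (Fin n) k, r • x = h r * x := fun r x => rfl
  have hC : ∀ c : k, h (MvPolynomial.C c) = MvPolynomial.C c := by
    intro c
    have := h.commutes c
    simpa [MvPolynomial.algebraMap_eq] using this
  set G : Finset (MvPolynomial (Fin n) k) :=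
    Finset.image (fun f : Fin n → Fin m => monomial (∑ i, Finsupp.single i (f i : ℕ)) (1 : k))
      Finset.univ with hG
  have small_mem : ∀ β : Fin n →₀ ℕ, (∀ i, β i < m) → (monomial β (1:k)) ∈ (G : Set _) := by
    intro β hβ
    refine Finset.mem_coe.mpr (Finset.mem_image.mpr ⟨fun i => ⟨β i, hβ i⟩, Finset.mem_univ _, ?_⟩)
    congr 1
    ext j
    simp [Finsupp.single_apply, Finset.sum_ite_eq']
  have key : ∀ d : ℕ, ∀ β : Fin n →₀ ℕ, (∑ i, β i) ≤ d →
      (monomial β (1:k)) ∈ Submodule.span (MvPolynomial (Fin n) k) (G : Set _) := by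
    intro d
    induction d with
    | zero =>
      intro β hβ
      refine Submodule.subset_span (small_mem β fun i => ?_)
      have : β i ≤ ∑ j, β j := Finset.single_le_sum (fun j _ => Nat.zero_le _) (Finset.mem_univ i)
      omega
    | succ d ih =>
      intro β hβ
      by_cases hsm : ∀ i, β i < m
      · exact Submodule.subset_span (small_mem β hsm)
      · push_neg at hsm
        obtain ⟨i, hi⟩ := hsm
        set γ : Fin n →₀ ℕ := β - Finsupp.single i m with hγ
        have hβγ : γ + Finsupp.single i m = β := by
          ext j
          by_cases hj : j = i
          · subst hj
            simp [hγ, Finsupp.sub_apply, Finsupp.single_apply]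
            omega
          · simp [hγ, Finsupp.sub_apply, Finsupp.single_apply, Ne.symm hj]
        have hsum : (∑ j, γ j) + m = ∑ j, β j := by
          rw [← hβγ]
          simp only [Finsupp.add_apply]
          rw [Finset.sum_add_distrib]
          congr 1
          simp [Finsupp.single_apply]
        have heq : monomial β (1:k) =
            (MvPolynomial.X i : MvPolynomial (Fin n) k) • monomial γ (1:k)
            - ∑ j, (MvPolynomial.C (a i j) : MvPolynomial (Fin n) k) •
                monomial (γ + Finsupp.single j 1) (1:k) := by
          simp only [hsmul, hC, hh i]
          have hXm : (MvPolynomial.X i : MvPolynomial (Fin n) k) ^ m =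
              monomial (Finsupp.single i m) (1:k) := MvPolynomial.X_pow_eq_monomial
          have hXj : ∀ j, (MvPolynomial.X j : MvPolynomial (Fin n) k) =
              monomial (Finsupp.single j 1) (1:k) := fun j => rfl
          rw [add_mul, Finset.sum_mul]
          have h1 : (MvPolynomial.X i : MvPolynomial (Fin n) k) ^ m * monomial γ (1:k) =
              monomial β (1:k) := by
            rw [hXm, monomial_mul, ← hβγ, add_comm, mul_one]
          have h2 : ∀ j, MvPolynomial.C (a i j) * MvPolynomial.X j * monomial γ (1:k) =
              MvPolynomial.C (a i j) * monomial (γ + Finsupp.single j 1) (1:k) := by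
            intro j
            rw [mul_assoc, hXj j, monomial_mul, mul_one, add_comm]
          simp only [h1, h2]
          ring
        rw [heq]
        have hγd : (∑ j, γ j) ≤ d := by omega
        refine sub_mem (Submodule.smul_mem _ _ (ih γ hγd)) (Submodule.sum_mem _ fun j _ => ?_)
        refine Submodule.smul_mem _ _ (ih _ ?_)
        have : (∑ l, ((γ + Finsupp.single j 1 : Fin n →₀ ℕ)) l) = (∑ l, γ l) + 1 := by
          simp only [Finsupp.add_apply]
          rw [Finset.sum_add_distrib]
          congr 1
          simp [Finsupp.single_apply]
        omega
  show Module.Finite (MvPolynomial (Fin n) k) (MvPolynomial (Fin n) k)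
  refine ⟨⟨G, ?_⟩⟩
  rw [eq_top_iff]
  intro p _
  rw [p.as_sum]
  refine Submodule.sum_mem _ fun v hv => ?_
  have : monomial v (coeff v p) =
      (MvPolynomial.C (coeff v p) : MvPolynomial (Fin n) k) • monomial v (1:k) := by
    rw [hsmul, hC, C_mul_monomial, mul_one]
  rw [this]
  exact Submodule.smul_mem _ _ (key (∑ i, v i) v le_rfl)
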